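/- In the two-community setup with stubborn nodes v_0, v_1 holding values 0 and 1, the average states y_h = (1/n_h)∑_{i∈U_h} x_i satisfy: y_0 ≤ (1 + n_0/n_1 + γ/β_0)^{-1}, 1 − y_1 ≤ (1 + n_1/n_0 + γ/β_1)^{-1}, and y_1 − y_0 ≤ (1 + β_0/γ + β_1/γ)^{-1}. -/

import Mathlib

open Matrix

/-- bounds on the average states `y_0, y_1` of the two communities in
the two-community setup with stubborn nodes `v_0` (value 0) and `v_1` (value 1). -/
theorem stmt_17 {V : Type*} [Fintype V] [DecidableEq V]
    (v0 v1 : V) (U0 U1 : Finset V)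
    (hv : v0 ≠ v1) (hv0 : v0 ∉ U0 ∪ U1) (hv1 : v1 ∉ U0 ∪ U1)
    (hU01 : Disjoint U0 U1) (hU0ne : U0.Nonempty) (hU1ne : U1.Nonempty)
    (hpart : (Finset.univ : Finset V) = insert v0 (insert v1 (U0 ∪ U1)))
    (γ β0 β1 : ℝ) (hγ : 0 < γ) (hβ0 : 0 < β0) (hβ1 : 0 < β1)
    (W : Matrix V V ℝ)
    (hWnn : ∀ i j, 0 ≤ W i j)
    (hv0row : W v0 v0 = γ ∧ ∀ j, j ≠ v0 → W v0 j = 0)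
    (hv1row : W v1 v1 = γ ∧ ∀ j, j ≠ v1 → W v1 j = 0)
    (hU0stub : ∀ i ∈ U0, W i v0 = γ ∧ W i v1 = 0)
    (hU1stub : ∀ i ∈ U1, W i v1 = γ ∧ W i v0 = 0)
    (hsym : ∀ i ∈ U0 ∪ U1, ∀ j ∈ U0 ∪ U1, W i j = W j i)
    (hirr : ∀ a ∈ U0 ∪ U1, ∀ b ∈ U0 ∪ U1, a ≠ b →
      Relation.TransGen (fun c d => c ∈ U0 ∪ U1 ∧ d ∈ U0 ∪ U1 ∧ 0 < W c d) a b)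
    (hβ0row : ∀ i ∈ U0, ∑ j ∈ U1, W i j = β0)
    (hβ1row : ∀ i ∈ U1, ∑ j ∈ U0, W i j = β1)
    (L : Matrix V V ℝ)
    (hL : L = Matrix.diagonal (fun i => ∑ j, W i j) - W)
    (x : V → ℝ)
    (hx0 : x v0 = 0) (hx1 : x v1 = 1)
    (hxharm : ∀ i ∈ U0 ∪ U1, L.mulVec x i = 0)
    (y0 y1 : ℝ)
    (hy0 : y0 = (U0.card : ℝ)⁻¹ * ∑ i ∈ U0, x i)
    (hy1 : y1 = (U1.card : ℝ)⁻¹ * ∑ i ∈ U1, x i) :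
    y0 ≤ (1 + (U0.card : ℝ) / (U1.card : ℝ) + γ / β0)⁻¹ ∧
    1 - y1 ≤ (1 + (U1.card : ℝ) / (U0.card : ℝ) + γ / β1)⁻¹ ∧
    y1 - y0 ≤ (1 + β0 / γ + β1 / γ)⁻¹ := by
  have hn0pos : (0:ℝ) < (U0.card : ℝ) := by
    exact_mod_cast Finset.card_pos.mpr hU0ne
  have hn1pos : (0:ℝ) < (U1.card : ℝ) := by
    exact_mod_cast Finset.card_pos.mpr hU1ne
  have hn0ne : (U0.card : ℝ) ≠ 0 := ne_of_gt hn0pos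
  have hn1ne : (U1.card : ℝ) ≠ 0 := ne_of_gt hn1pos
  have hgpos : (0:ℝ) < γ + β0 + β1 := by linarith
  have hgne : γ + β0 + β1 ≠ 0 := ne_of_gt hgpos
  -- split sums over the universe
  have hsplit : ∀ f : V → ℝ,
      ∑ j, f j = f v0 + f v1 + (∑ j ∈ U0, f j + ∑ j ∈ U1, f j) := by
    intro f
    have h0 : v0 ∉ insert v1 (U0 ∪ U1) := by
      simp only [Finset.mem_insert]
      push_neg
      exact ⟨hv, hv0⟩
    calc ∑ j, f j = ∑ j ∈ insert v0 (insert v1 (U0 ∪ U1)), f j := by rw [← hpart]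
      _ = f v0 + (f v1 + ∑ j ∈ U0 ∪ U1, f j) := by
          rw [Finset.sum_insert h0, Finset.sum_insert hv1]
      _ = f v0 + f v1 + (∑ j ∈ U0, f j + ∑ j ∈ U1, f j) := by
          rw [Finset.sum_union hU01]; ring
  have hLmv : ∀ i, L.mulVec x i = (∑ j, W i j) * x i - ∑ j, W i j * x j := by
    intro i
    rw [hL, Matrix.sub_mulVec, Pi.sub_apply, Matrix.mulVec_diagonal]
    simp [Matrix.mulVec, dotProduct]
  -- balance : β0 * n0 = β1 * n1
  have hbal : β0 * (U0.card : ℝ) = β1 * (U1.card : ℝ) := by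
    have h1 : ∑ i ∈ U0, ∑ j ∈ U1, W i j = ∑ j ∈ U1, ∑ i ∈ U0, W i j :=
      Finset.sum_comm
    have h2 : ∑ i ∈ U0, ∑ j ∈ U1, W i j = β0 * (U0.card : ℝ) := by
      rw [Finset.sum_congr rfl hβ0row, Finset.sum_const, nsmul_eq_mul, mul_comm]
    have h3 : ∑ j ∈ U1, ∑ i ∈ U0, W i j = β1 * (U1.card : ℝ) := by
      have : ∀ j ∈ U1, ∑ i ∈ U0, W i j = β1 := by
        intro j hj
        have : ∑ i ∈ U0, W i j = ∑ i ∈ U0, W j i := by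
          refine Finset.sum_congr rfl fun i hi => ?_
          exact hsym i (Finset.mem_union_left _ hi) j (Finset.mem_union_right _ hj)
        rw [this, hβ1row j hj]
      rw [Finset.sum_congr rfl this, Finset.sum_const, nsmul_eq_mul, mul_comm]
    rw [← h2, h1, h3]
  -- per-node equation on U0
  have hEqU0 : ∀ i ∈ U0, (γ + (∑ j ∈ U0, W i j) + β0) * x i
      = ∑ j ∈ U0, W i j * x j + ∑ j ∈ U1, W i j * x j := by
    intro i hi
    have h := hxharm i (Finset.mem_union_left _ hi)
    rw [hLmv i, hsplit (fun j => W i j), hsplit (fun j => W i j * x j)] at h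
    obtain ⟨hiv0, hiv1⟩ := hU0stub i hi
    rw [hiv0, hiv1, hx0, hx1, hβ0row i hi] at h
    linear_combination h
  -- per-node equation on U1
  have hEqU1 : ∀ i ∈ U1, (γ + (∑ j ∈ U1, W i j) + β1) * x i
      = γ + (∑ j ∈ U0, W i j * x j + ∑ j ∈ U1, W i j * x j) := by
    intro i hi
    have h := hxharm i (Finset.mem_union_right _ hi)
    rw [hLmv i, hsplit (fun j => W i j), hsplit (fun j => W i j * x j)] at h
    obtain ⟨hiv1, hiv0⟩ := hU1stub i hi
    rw [hiv0, hiv1, hx0, hx1, hβ1row i hi] at h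
    linear_combination h
  -- within-community double sums cancel by symmetry
  have hswap0 : ∑ i ∈ U0, ∑ j ∈ U0, W i j * x j
      = ∑ i ∈ U0, ∑ j ∈ U0, W i j * x i := by
    rw [Finset.sum_comm]
    refine Finset.sum_congr rfl fun a ha => Finset.sum_congr rfl fun b hb => ?_
    rw [hsym b (Finset.mem_union_left _ hb) a (Finset.mem_union_left _ ha)]
  have hswap1 : ∑ i ∈ U1, ∑ j ∈ U1, W i j * x j
      = ∑ i ∈ U1, ∑ j ∈ U1, W i j * x i := by
    rw [Finset.sum_comm]
    refine Finset.sum_congr rfl fun a ha => Finset.sum_congr rfl fun b hb => ?_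
    rw [hsym b (Finset.mem_union_right _ hb) a (Finset.mem_union_right _ ha)]
  -- cross terms
  have hcross0 : ∑ i ∈ U0, ∑ j ∈ U1, W i j * x j = β1 * ∑ j ∈ U1, x j := by
    rw [Finset.sum_comm, Finset.mul_sum]
    refine Finset.sum_congr rfl fun j hj => ?_
    rw [← Finset.sum_mul]
    congr 1
    have : ∑ i ∈ U0, W i j = ∑ i ∈ U0, W j i := by
      refine Finset.sum_congr rfl fun i hi => ?_
      exact hsym i (Finset.mem_union_left _ hi) j (Finset.mem_union_right _ hj)
    rw [this, hβ1row j hj]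
  have hcross1 : ∑ i ∈ U1, ∑ j ∈ U0, W i j * x j = β0 * ∑ j ∈ U0, x j := by
    rw [Finset.sum_comm, Finset.mul_sum]
    refine Finset.sum_congr rfl fun j hj => ?_
    rw [← Finset.sum_mul]
    congr 1
    have : ∑ i ∈ U1, W i j = ∑ i ∈ U1, W j i := by
      refine Finset.sum_congr rfl fun i hi => ?_
      exact hsym i (Finset.mem_union_right _ hi) j (Finset.mem_union_left _ hj)
    rw [this, hβ0row j hj]
  -- summed equation on U0 : (γ+β0) S0 = β1 S1
  have hEq1 : (γ + β0) * (∑ i ∈ U0, x i) = β1 * ∑ i ∈ U1, x i := by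
    have key : ∑ i ∈ U0, ((γ + (∑ j ∈ U0, W i j) + β0) * x i)
        = ∑ i ∈ U0, (∑ j ∈ U0, W i j * x j + ∑ j ∈ U1, W i j * x j) :=
      Finset.sum_congr rfl hEqU0
    have lhs : ∑ i ∈ U0, ((γ + (∑ j ∈ U0, W i j) + β0) * x i)
        = (γ + β0) * (∑ i ∈ U0, x i) + ∑ i ∈ U0, ∑ j ∈ U0, W i j * x i := by
      rw [Finset.mul_sum, ← Finset.sum_add_distrib]
      refine Finset.sum_congr rfl fun i _ => ?_
      rw [← Finset.sum_mul]; ring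
    rw [lhs, Finset.sum_add_distrib, hswap0, hcross0] at key
    linarith
  -- summed equation on U1 : (γ+β1) S1 = γ n1 + β0 S0
  have hEq2 : (γ + β1) * (∑ i ∈ U1, x i)
      = γ * (U1.card : ℝ) + β0 * ∑ i ∈ U0, x i := by
    have key : ∑ i ∈ U1, ((γ + (∑ j ∈ U1, W i j) + β1) * x i)
        = ∑ i ∈ U1, (γ + (∑ j ∈ U0, W i j * x j + ∑ j ∈ U1, W i j * x j)) :=
      Finset.sum_congr rfl hEqU1
    have lhs : ∑ i ∈ U1, ((γ + (∑ j ∈ U1, W i j) + β1) * x i)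
        = (γ + β1) * (∑ i ∈ U1, x i) + ∑ i ∈ U1, ∑ j ∈ U1, W i j * x i := by
      rw [Finset.mul_sum, ← Finset.sum_add_distrib]
      refine Finset.sum_congr rfl fun i _ => ?_
      rw [← Finset.sum_mul]; ring
    have rhs : ∑ i ∈ U1, (γ + (∑ j ∈ U0, W i j * x j + ∑ j ∈ U1, W i j * x j))
        = γ * (U1.card : ℝ) + (∑ i ∈ U1, ∑ j ∈ U0, W i j * x j
            + ∑ i ∈ U1, ∑ j ∈ U1, W i j * x j) := by
      rw [Finset.sum_add_distrib, Finset.sum_add_distrib, Finset.sum_const,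
        nsmul_eq_mul, mul_comm]
    rw [lhs, rhs, hswap1, hcross1] at key
    linarith
  -- exact values of the community sums
  have hS0 : (γ + β0 + β1) * (∑ i ∈ U0, x i) = β1 * (U1.card : ℝ) := by
    have h : γ * ((γ + β0 + β1) * (∑ i ∈ U0, x i)) = γ * (β1 * (U1.card : ℝ)) := by
      linear_combination (γ + β1) * hEq1 + β1 * hEq2
    exact mul_left_cancel₀ (ne_of_gt hγ) h
  have hS1 : (γ + β0 + β1) * (∑ i ∈ U1, x i) = (γ + β0) * (U1.card : ℝ) := by
    have h : β1 * ((γ + β0 + β1) * (∑ i ∈ U1, x i))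
        = β1 * ((γ + β0) * (U1.card : ℝ)) := by
      linear_combination (γ + β0) * hS0 - (γ + β0 + β1) * hEq1
    exact mul_left_cancel₀ (ne_of_gt hβ1) h
  -- exact values of the averages
  have hy0' : y0 = β0 / (γ + β0 + β1) := by
    rw [hy0, inv_mul_eq_div, div_eq_div_iff hn0ne hgne]
    linear_combination hS0 - hbal
  have hy1' : y1 = (γ + β0) / (γ + β0 + β1) := by
    rw [hy1, inv_mul_eq_div, div_eq_div_iff hn1ne hgne]
    linear_combination hS1
  refine ⟨?_, ?_, ?_⟩
  · apply le_of_eq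
    have hb : 1 + (U0.card : ℝ) / (U1.card : ℝ) + γ / β0 = (γ + β0 + β1) / β0 := by
      field_simp
      linear_combination hbal
    rw [hy0', hb, inv_div]
  · apply le_of_eq
    have hb : 1 + (U1.card : ℝ) / (U0.card : ℝ) + γ / β1 = (γ + β0 + β1) / β1 := by
      field_simp
      linear_combination -hbal
    rw [hy1', hb, inv_div]
    field_simp
    ring
  · apply le_of_eq
    have hb : 1 + β0 / γ + β1 / γ = (γ + β0 + β1) / γ := by
      field_simp
    rw [hy0', hy1', hb, inv_div, div_sub_div_same]
    ring_nf
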